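/- Let (Ω, F, P) be a probability space with Ω a standard Borel space. Let Z, E₁, E₂, X₁, X₂ be measurable random variables into measurable spaces. Assume there exist measurable maps g₁, g₂, ĝ₁, ĝ₂ such that X₁ = g₁ ∘ ⟨Z, E₁⟩, X₂ = g₂ ∘ ⟨Z, E₂⟩, E₁ = ĝ₁ ∘ ⟨Z, X₁⟩, and E₂ = ĝ₂ ∘ ⟨Z, X₂⟩ hold everywhere on Ω. Then X₁ and X₂ are conditionally independent given σ(Z) if and only if E₁ and E₂ are conditionally independent given σ(Z). -/
import Mathlib


open MeasureTheory ProbabilityTheory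

lemma aux_adjoin {Ω 𝒵 α β : Type*}
    [mΩ : MeasurableSpace Ω] [StandardBorelSpace Ω]
    [m𝒵 : MeasurableSpace 𝒵] [mα : MeasurableSpace α] [mβ : MeasurableSpace β]
    {μ : Measure Ω} [IsProbabilityMeasure μ]
    {Z : Ω → 𝒵} {f : Ω → α} {g : Ω → β}
    (hZ : Measurable Z) (hf : Measurable f) (hg : Measurable g)
    (h : CondIndepFun (MeasurableSpace.comap Z inferInstance) hZ.comap_le f g μ) :
    CondIndepFun (MeasurableSpace.comap Z inferInstance) hZ.comap_le
      (fun ω => (Z ω, f ω)) g μ := by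
  have hZf : Measurable (fun ω => (Z ω, f ω)) := hZ.prodMk hf
  rw [condIndepFun_iff_condIndep]
  have hpm1 : MeasurableSpace.comap (fun ω => (Z ω, f ω)) inferInstance
      = MeasurableSpace.generateFrom
        {s | ∃ A B, MeasurableSet A ∧ MeasurableSet B ∧ s = Z ⁻¹' A ∩ f ⁻¹' B} := by
    have hsup : MeasurableSpace.comap (fun ω => (Z ω, f ω)) inferInstance
        = MeasurableSpace.comap Z m𝒵 ⊔ MeasurableSpace.comap f mα := by
      rw [show (inferInstance : MeasurableSpace (𝒵 × α))
          = m𝒵.comap Prod.fst ⊔ mα.comap Prod.snd from rfl,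
        MeasurableSpace.comap_sup, MeasurableSpace.comap_comp, MeasurableSpace.comap_comp]
      rfl
    rw [hsup]
    refine le_antisymm (sup_le ?_ ?_) ?_
    · rintro s ⟨A, hA, rfl⟩
      exact MeasurableSpace.measurableSet_generateFrom ⟨A, Set.univ, hA, MeasurableSet.univ, by simp⟩
    · rintro s ⟨B, hB, rfl⟩
      exact MeasurableSpace.measurableSet_generateFrom ⟨Set.univ, B, MeasurableSet.univ, hB, by simp⟩
    · rw [MeasurableSpace.generateFrom_le_iff]
      rintro s ⟨A, B, hA, hB, rfl⟩
      show MeasurableSet[MeasurableSpace.comap Z m𝒵 ⊔ MeasurableSpace.comap f mα]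
        (Z ⁻¹' A ∩ f ⁻¹' B)
      have h1 : MeasurableSet[MeasurableSpace.comap Z m𝒵] (Z ⁻¹' A) := ⟨A, hA, rfl⟩
      have h2 : MeasurableSet[MeasurableSpace.comap f mα] (f ⁻¹' B) := ⟨B, hB, rfl⟩
      exact MeasurableSet.inter
        ((le_sup_left : MeasurableSpace.comap Z m𝒵 ≤ _) _ h1)
        ((le_sup_right : MeasurableSpace.comap f mα ≤ _) _ h2)
  have hpm2 : MeasurableSpace.comap g inferInstance = MeasurableSpace.generateFrom
      {t | ∃ C, MeasurableSet C ∧ t = g ⁻¹' C} := by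
    refine le_antisymm ?_ ?_
    · rintro s ⟨C, hC, rfl⟩
      exact MeasurableSpace.measurableSet_generateFrom ⟨C, hC, rfl⟩
    · rw [MeasurableSpace.generateFrom_le_iff]
      rintro s ⟨C, hC, rfl⟩
      exact ⟨C, hC, rfl⟩
  refine CondIndepSets.condIndep hZf.comap_le hg.comap_le ?_ ?_ hpm1 hpm2 ?_
  · rintro s ⟨A, B, hA, hB, rfl⟩ t ⟨A', B', hA', hB', rfl⟩ -
    exact ⟨A ∩ A', B ∩ B', hA.inter hA', hB.inter hB', by
      simp only [Set.preimage_inter]; ac_rfl⟩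
  · rintro s ⟨C, hC, rfl⟩ t ⟨C', hC', rfl⟩ -
    exact ⟨C ∩ C', hC.inter hC', by simp [Set.preimage_inter]⟩
  · have hmeas1 : ∀ s ∈ {s | ∃ A B, MeasurableSet A ∧ MeasurableSet B ∧
        s = Z ⁻¹' A ∩ f ⁻¹' B}, MeasurableSet s := by
      rintro s ⟨A, B, hA, hB, rfl⟩
      exact (hZ hA).inter (hf hB)
    have hmeas2 : ∀ s ∈ {t | ∃ C, MeasurableSet C ∧ t = g ⁻¹' C}, MeasurableSet s := by
      rintro s ⟨C, hC, rfl⟩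
      exact hg hC
    rw [condIndepSets_iff _ hZ.comap_le _ _ hmeas1 hmeas2 μ]
    rintro s t ⟨A, B, hA, hB, rfl⟩ ⟨C, hC, rfl⟩
    have hkey : (μ⟦f ⁻¹' B ∩ g ⁻¹' C | MeasurableSpace.comap Z m𝒵⟧)
        =ᵐ[μ] (μ⟦f ⁻¹' B | MeasurableSpace.comap Z m𝒵⟧)
          * (μ⟦g ⁻¹' C | MeasurableSpace.comap Z m𝒵⟧) :=
      (condIndepFun_iff _ hZ.comap_le f g hf hg μ).mp h _ _ ⟨B, hB, rfl⟩ ⟨C, hC, rfl⟩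
    have hAm' : MeasurableSet[MeasurableSpace.comap Z m𝒵] (Z ⁻¹' A) := ⟨A, hA, rfl⟩
    have hind : ∀ (u : Set Ω), MeasurableSet u →
        (μ⟦Z ⁻¹' A ∩ u | MeasurableSpace.comap Z m𝒵⟧)
          =ᵐ[μ] (Z ⁻¹' A).indicator (μ⟦u | MeasurableSpace.comap Z m𝒵⟧) := by
      intro u hu
      have h1 : (Z ⁻¹' A ∩ u).indicator (fun _ => (1 : ℝ))
          = (Z ⁻¹' A).indicator (u.indicator (fun _ => (1 : ℝ))) := by
        rw [Set.indicator_indicator]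
      rw [show (μ⟦Z ⁻¹' A ∩ u | MeasurableSpace.comap Z m𝒵⟧)
          = μ[(Z ⁻¹' A).indicator (u.indicator (fun _ => (1 : ℝ))) |
              MeasurableSpace.comap Z m𝒵] from by rw [← h1]]
      exact condExp_indicator ((integrable_const (1 : ℝ)).indicator hu) hAm'
    have h2 : (μ⟦(Z ⁻¹' A ∩ f ⁻¹' B) ∩ g ⁻¹' C | MeasurableSpace.comap Z m𝒵⟧)
        =ᵐ[μ] (Z ⁻¹' A).indicator ((μ⟦f ⁻¹' B | MeasurableSpace.comap Z m𝒵⟧)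
          * (μ⟦g ⁻¹' C | MeasurableSpace.comap Z m𝒵⟧)) := by
      have h0 := hind ((f ⁻¹' B) ∩ (g ⁻¹' C)) ((hf hB).inter (hg hC))
      rw [← Set.inter_assoc] at h0
      refine h0.trans (hkey.mono fun ω hω => ?_)
      by_cases hmem : ω ∈ Z ⁻¹' A
      · rw [Set.indicator_of_mem hmem, Set.indicator_of_mem hmem, hω]
      · rw [Set.indicator_of_notMem hmem, Set.indicator_of_notMem hmem]
    refine h2.trans ?_
    have h3 := hind (f ⁻¹' B) (hf hB)
    filter_upwards [h3] with ω hω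
    rw [Pi.mul_apply, hω]
    by_cases hmem : ω ∈ Z ⁻¹' A
    · simp [Set.indicator_of_mem hmem]
    · simp [Set.indicator_of_notMem hmem]


lemma aux_step {Ω 𝒵 α β γ : Type*}
    [mΩ : MeasurableSpace Ω] [StandardBorelSpace Ω]
    [m𝒵 : MeasurableSpace 𝒵] [mα : MeasurableSpace α] [mβ : MeasurableSpace β]
    [mγ : MeasurableSpace γ]
    {μ : Measure Ω} [IsProbabilityMeasure μ] {Z : Ω → 𝒵} (hZ : Measurable Z)
    (f : Ω → α) (g : Ω → β) (φ : 𝒵 × α → γ) (F : Ω → γ)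
    (hf : Measurable f) (hg : Measurable g) (hφ : Measurable φ)
    (hFeq : ∀ ω, F ω = φ (Z ω, f ω))
    (h : CondIndepFun (MeasurableSpace.comap Z inferInstance) hZ.comap_le f g μ) :
    CondIndepFun (MeasurableSpace.comap Z inferInstance) hZ.comap_le F g μ := by
  have h1 := aux_adjoin hZ hf hg h
  have h2 := h1.comp hφ measurable_id
  have hFeq' : F = φ ∘ (fun ω => (Z ω, f ω)) := funext hFeq
  rw [hFeq']
  exact h2

/-- Proposition (Conditional Independence Condition): for measurements generated from the
latent variables and noise terms through mechanisms invertible in the noise given the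
latents, the measurements are conditionally independent given the latents iff the noise
terms are. -/
theorem stmt8 {Ω 𝒵 ℰ₁ ℰ₂ 𝒳₁ 𝒳₂ : Type*}
    [mΩ : MeasurableSpace Ω] [StandardBorelSpace Ω]
    [MeasurableSpace 𝒵] [MeasurableSpace ℰ₁] [MeasurableSpace ℰ₂]
    [MeasurableSpace 𝒳₁] [MeasurableSpace 𝒳₂]
    {μ : Measure Ω} [IsProbabilityMeasure μ]
    {Z : Ω → 𝒵} {E₁ : Ω → ℰ₁} {E₂ : Ω → ℰ₂} {X₁ : Ω → 𝒳₁} {X₂ : Ω → 𝒳₂}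
    (hZ : Measurable Z) (hE₁ : Measurable E₁) (hE₂ : Measurable E₂)
    (hX₁ : Measurable X₁) (hX₂ : Measurable X₂)
    (g₁ : 𝒵 × ℰ₁ → 𝒳₁) (g₂ : 𝒵 × ℰ₂ → 𝒳₂)
    (gInv₁ : 𝒵 × 𝒳₁ → ℰ₁) (gInv₂ : 𝒵 × 𝒳₂ → ℰ₂)
    (hg₁ : Measurable g₁) (hg₂ : Measurable g₂)
    (hgInv₁ : Measurable gInv₁) (hgInv₂ : Measurable gInv₂)
    (hX₁eq : ∀ ω, X₁ ω = g₁ (Z ω, E₁ ω)) (hX₂eq : ∀ ω, X₂ ω = g₂ (Z ω, E₂ ω))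
    (hE₁eq : ∀ ω, E₁ ω = gInv₁ (Z ω, X₁ ω)) (hE₂eq : ∀ ω, E₂ ω = gInv₂ (Z ω, X₂ ω)) :
    CondIndepFun (MeasurableSpace.comap Z inferInstance) hZ.comap_le X₁ X₂ μ ↔
    CondIndepFun (MeasurableSpace.comap Z inferInstance) hZ.comap_le E₁ E₂ μ := by
  constructor
  · intro h
    have h1 := aux_step hZ X₁ X₂ gInv₁ E₁ hX₁ hX₂ hgInv₁ hE₁eq h
    have h2 := Kernel.IndepFun.symm h1
    have h3 := aux_step hZ X₂ E₁ gInv₂ E₂ hX₂ hE₁ hgInv₂ hE₂eq h2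
    exact Kernel.IndepFun.symm h3
  · intro h
    have h1 := aux_step hZ E₁ E₂ g₁ X₁ hE₁ hE₂ hg₁ hX₁eq h
    have h2 := Kernel.IndepFun.symm h1
    have h3 := aux_step hZ E₂ X₁ g₂ X₂ hE₂ hX₁ hg₂ hX₂eq h2
    exact Kernel.IndepFun.symm h3
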